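/- arXiv:1907.11917 — 5 statements merged into one kernel-verified Lean document; each statement's English description precedes it below -/
import Mathlib

section
/- Let a, b ∈ ℝ³ be unit vectors with a × b ≠ 0, and let t ∈ ℝ³. Suppose the two backprojected rays intersect, i.e., there exist λ₀ ≥ 0 and λ₁ ≥ 0 with t + λ₀·a = λ₁·b. Then the depths along the rays are λ₀ = ‖b × t‖/‖a × b‖ and λ₁ = ‖a × t‖/‖a × b‖. -/
open scoped RealInnerProductSpace
open Matrix

abbrev E3 := EuclideanSpace ℝ (Fin 3)

/-- Cross product on `EuclideanSpace ℝ (Fin 3)`. -/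
noncomputable def cross3 (a b : E3) : E3 :=
  (WithLp.equiv 2 (Fin 3 → ℝ)).symm
    (crossProduct ((WithLp.equiv 2 (Fin 3 → ℝ)) a) ((WithLp.equiv 2 (Fin 3 → ℝ)) b))

lemma cross3_smul_right (c : ℝ) (a b : E3) : cross3 a (c • b) = c • cross3 a b := by
  simp [cross3, WithLp.ofLp_smul, WithLp.toLp_smul, _root_.map_smul]

lemma cross3_sub_right (a b c : E3) : cross3 a (b - c) = cross3 a b - cross3 a c := by
  simp [cross3, WithLp.ofLp_sub, WithLp.toLp_sub, map_sub]

lemma cross3_self (a : E3) : cross3 a a = 0 := by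
  simp [cross3, cross_self]

lemma cross3_anticomm (a b : E3) : cross3 a b = -cross3 b a := by
  simp only [cross3]; rw [← cross_anticomm]; rfl

theorem stmt_2 (a b t : E3) (ha : ‖a‖ = 1) (hb : ‖b‖ = 1) (hab : cross3 a b ≠ 0)
    (l₀ l₁ : ℝ) (h₀ : 0 ≤ l₀) (h₁ : 0 ≤ l₁) (hint : t + l₀ • a = l₁ • b) :
    l₀ = ‖cross3 b t‖ / ‖cross3 a b‖ ∧ l₁ = ‖cross3 a t‖ / ‖cross3 a b‖ := by
  have ht : t = l₁ • b - l₀ • a := by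
    have := hint; linear_combination (norm := module) this
  have hbt : cross3 b t = l₀ • cross3 a b := by
    rw [ht, cross3_sub_right, cross3_smul_right, cross3_smul_right, cross3_self,
      cross3_anticomm b a]
    module
  have hat : cross3 a t = l₁ • cross3 a b := by
    rw [ht, cross3_sub_right, cross3_smul_right, cross3_smul_right, cross3_self]
    module
  have hn : ‖cross3 a b‖ ≠ 0 := norm_ne_zero_iff.mpr hab
  constructor
  · rw [hbt, norm_smul, Real.norm_of_nonneg h₀, mul_div_assoc, div_self hn, mul_one]
  · rw [hat, norm_smul, Real.norm_of_nonneg h₁, mul_div_assoc, div_self hn, mul_one]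
end

section
/- Let a, b ∈ ℝ³ be unit vectors with a × b ≠ 0, and let t ∈ ℝ³. Suppose the two rays intersect: there exist λ₀ > 0 and λ₁ > 0 with t + λ₀·a = λ₁·b. Then the unweighted alternative midpoint recovers the intersection point: (1/2)·(t + (‖b × t‖/‖a × b‖)·a + (‖a × t‖/‖a × b‖)·b) = λ₁·b. -/
open scoped RealInnerProductSpace
open Matrix

lemma cross3_right (a : E3) (x y : E3) (c d : ℝ) :
    cross3 a (c • x + d • y) = c • cross3 a x + d • cross3 a y := by
  simp only [cross3, WithLp.equiv_apply, WithLp.ofLp_add, WithLp.ofLp_smul, map_add, LinearMap.map_smul]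
  rfl

theorem stmt_5 (a b t : E3) (ha : ‖a‖ = 1) (hb : ‖b‖ = 1) (hab : cross3 a b ≠ 0)
    (l₀ l₁ : ℝ) (h₀ : 0 < l₀) (h₁ : 0 < l₁) (hint : t + l₀ • a = l₁ • b) :
    (1 / 2 : ℝ) • (t + (‖cross3 b t‖ / ‖cross3 a b‖) • a +
      (‖cross3 a t‖ / ‖cross3 a b‖) • b) = l₁ • b := by
  have ht : t = l₁ • b + (-l₀) • a := by
    rw [neg_smul, ← sub_eq_add_neg, eq_sub_iff_add_eq, hint]
  have hbt : cross3 b t = l₀ • cross3 a b := by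
    rw [ht, cross3_right, cross3_self, cross3_anticomm b a]
    module
  have hat : cross3 a t = l₁ • cross3 a b := by
    rw [ht, cross3_right, cross3_self, cross3_anticomm a b]
    module
  have hne : ‖cross3 a b‖ ≠ 0 := norm_ne_zero_iff.mpr hab
  have e1 : ‖cross3 b t‖ / ‖cross3 a b‖ = l₀ := by
    rw [hbt, norm_smul, Real.norm_eq_abs, abs_of_pos h₀, mul_div_assoc,
      div_self hne, mul_one]
  have e2 : ‖cross3 a t‖ / ‖cross3 a b‖ = l₁ := by
    rw [hat, norm_smul, Real.norm_eq_abs, abs_of_pos h₁, mul_div_assoc,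
      div_self hne, mul_one]
  rw [e1, e2, ht]
  module
end

section
/- Let L₀ and L₁ be two lines in ℝ³ with unit direction vectors m₀ and m₁ satisfying m₀ × m₁ ≠ 0, and let (r₀, r₁) with r₀ ∈ L₀ and r₁ ∈ L₁ be the closest pair of points on the two lines. Then the midpoint x* = (r₀ + r₁)/2 minimizes the sum of squared distances to the two lines: for every x ∈ ℝ³, dist(x*, L₀)² + dist(x*, L₁)² ≤ dist(x, L₀)² + dist(x, L₁)². -/
open scoped RealInnerProductSpace
open Matrix

theorem stmt_9 (c₀ c₁ m₀ m₁ : E3)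
    (hm₀ : ‖m₀‖ = 1) (hm₁ : ‖m₁‖ = 1) (hnp : cross3 m₀ m₁ ≠ 0)
    (L₀ L₁ : Set E3)
    (hL₀ : L₀ = {y | ∃ s : ℝ, y = c₀ + s • m₀})
    (hL₁ : L₁ = {y | ∃ s : ℝ, y = c₁ + s • m₁})
    (r₀ r₁ : E3) (hr₀ : r₀ ∈ L₀) (hr₁ : r₁ ∈ L₁)
    (hclosest : ∀ p ∈ L₀, ∀ q ∈ L₁, ‖r₀ - r₁‖ ≤ ‖p - q‖) :
    ∀ x : E3,
      Metric.infDist ((1 / 2 : ℝ) • (r₀ + r₁)) L₀ ^ 2 +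
        Metric.infDist ((1 / 2 : ℝ) • (r₀ + r₁)) L₁ ^ 2 ≤
      Metric.infDist x L₀ ^ 2 + Metric.infDist x L₁ ^ 2 := by
  intro x
  set d := ‖r₀ - r₁‖ with hd
  set xs := (1 / 2 : ℝ) • (r₀ + r₁) with hxs
  have hne₀ : L₀.Nonempty := ⟨r₀, hr₀⟩
  have hne₁ : L₁.Nonempty := ⟨r₁, hr₁⟩
  -- upper bounds
  have hx0 : dist xs r₀ = d / 2 := by
    have : xs - r₀ = (1 / 2 : ℝ) • (r₁ - r₀) := by
      rw [hxs]; module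
    rw [dist_eq_norm, this, norm_smul, ← norm_sub_rev r₀ r₁]
    simp [hd]; ring
  have hx1 : dist xs r₁ = d / 2 := by
    have : xs - r₁ = (1 / 2 : ℝ) • (r₀ - r₁) := by
      rw [hxs]; module
    rw [dist_eq_norm, this, norm_smul]
    simp [hd]; ring
  have hu0 : Metric.infDist xs L₀ ≤ d / 2 := hx0 ▸ Metric.infDist_le_dist_of_mem hr₀
  have hu1 : Metric.infDist xs L₁ ≤ d / 2 := hx1 ▸ Metric.infDist_le_dist_of_mem hr₁
  -- lower bound
  have hlow : d ≤ Metric.infDist x L₀ + Metric.infDist x L₁ := by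
    have h1 : d - Metric.infDist x L₁ ≤ Metric.infDist x L₀ := by
      rw [← not_lt]
      intro h
      obtain ⟨p, hp, hpd⟩ := (Metric.infDist_lt_iff hne₀).1 h
      have h2 : d - dist x p ≤ Metric.infDist x L₁ := by
        rw [← not_lt]
        intro h'
        obtain ⟨q, hq, hqd⟩ := (Metric.infDist_lt_iff hne₁).1 h'
        have htri : dist p q ≤ dist x p + dist x q := dist_triangle_left p q x
        have hpq : d ≤ dist p q := by
          rw [dist_eq_norm]; exact hclosest p hp q hq
        linarith
      linarith
    linarith
  have h0 := Metric.infDist_nonneg (x := xs) (s := L₀)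
  have h1 := Metric.infDist_nonneg (x := xs) (s := L₁)
  have h2 := Metric.infDist_nonneg (x := x) (s := L₀)
  have h3 := Metric.infDist_nonneg (x := x) (s := L₁)
  nlinarith [sq_nonneg (Metric.infDist x L₀ - Metric.infDist x L₁),
    sq_nonneg (Metric.infDist xs L₀ - d/2), sq_nonneg (Metric.infDist xs L₁ - d/2)]
end

section
/- Let L₀ and L₁ be two lines in ℝ³ with unit direction vectors m₀ and m₁ satisfying m₀ × m₁ ≠ 0, let (r₀, r₁) with r₀ ∈ L₀ and r₁ ∈ L₁ be the closest pair of points on the two lines, and let w₀, w₁ > 0. Then the weighted average x* = (w₀·r₀ + w₁·r₁)/(w₀ + w₁) minimizes the weighted sum of squared distances to the two lines: for every x ∈ ℝ³, w₀·dist(x*, L₀)² + w₁·dist(x*, L₁)² ≤ w₀·dist(x, L₀)² + w₁·dist(x, L₁)². -/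
open scoped RealInnerProductSpace
open Matrix

lemma aux_dist_line_sq (c m : E3) (hm : ‖m‖ = 1) (x : E3) :
    Metric.infDist x {y | ∃ s : ℝ, y = c + s • m} ^ 2
      = ‖x - c‖ ^ 2 - ⟪x - c, m⟫ ^ 2 := by
  set t : ℝ := ⟪x - c, m⟫ with ht
  have hdist : ∀ s : ℝ, dist x (c + s • m) ^ 2
      = ‖x - c‖ ^ 2 - t ^ 2 + (s - t) ^ 2 := by
    intro s
    rw [dist_eq_norm]
    have h1 : x - (c + s • m) = (x - c) + (-s) • m := by module
    rw [h1, norm_add_sq_real, real_inner_smul_right, norm_smul, ← ht]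
    simp [hm]
    ring
  have hmem : (c + t • m) ∈ {y | ∃ s : ℝ, y = c + s • m} := ⟨t, rfl⟩
  have hub : Metric.infDist x {y | ∃ s : ℝ, y = c + s • m} ≤ dist x (c + t • m) :=
    Metric.infDist_le_dist_of_mem hmem
  have hlb : dist x (c + t • m) ≤ Metric.infDist x {y | ∃ s : ℝ, y = c + s • m} := by
    by_contra hcon
    push_neg at hcon
    obtain ⟨y, ⟨s, rfl⟩, hy⟩ :=
      (Metric.infDist_lt_iff ⟨_, hmem⟩).1 hcon
    have h2 : dist x (c + t • m) ^ 2 ≤ dist x (c + s • m) ^ 2 := by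
      rw [hdist, hdist]; nlinarith [sq_nonneg (s - t)]
    nlinarith [dist_nonneg (x := x) (y := c + s • m), dist_nonneg (x := x) (y := c + t • m)]
  have heq := le_antisymm hub hlb
  rw [heq, hdist]
  ring

lemma aux_expand (v u m : E3) :
    ‖v + u‖ ^ 2 - ⟪v + u, m⟫ ^ 2
      = (‖u‖ ^ 2 - ⟪u, m⟫ ^ 2) + (‖v‖ ^ 2 - ⟪v, m⟫ ^ 2)
        + 2 * (⟪v, u⟫ - ⟪v, m⟫ * ⟪u, m⟫) := by
  rw [norm_add_sq_real, inner_add_left]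
  ring

set_option maxHeartbeats 1000000 in
theorem stmt_10 (c₀ c₁ m₀ m₁ : E3)
    (hm₀ : ‖m₀‖ = 1) (hm₁ : ‖m₁‖ = 1) (hnp : cross3 m₀ m₁ ≠ 0)
    (L₀ L₁ : Set E3)
    (hL₀ : L₀ = {y | ∃ s : ℝ, y = c₀ + s • m₀})
    (hL₁ : L₁ = {y | ∃ s : ℝ, y = c₁ + s • m₁})
    (r₀ r₁ : E3) (hr₀ : r₀ ∈ L₀) (hr₁ : r₁ ∈ L₁)
    (hclosest : ∀ p ∈ L₀, ∀ q ∈ L₁, ‖r₀ - r₁‖ ≤ ‖p - q‖)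
    (w₀ w₁ : ℝ) (hw₀ : 0 < w₀) (hw₁ : 0 < w₁) :
    ∀ x : E3,
      w₀ * Metric.infDist ((w₀ + w₁)⁻¹ • (w₀ • r₀ + w₁ • r₁)) L₀ ^ 2 +
        w₁ * Metric.infDist ((w₀ + w₁)⁻¹ • (w₀ • r₀ + w₁ • r₁)) L₁ ^ 2 ≤
      w₀ * Metric.infDist x L₀ ^ 2 + w₁ * Metric.infDist x L₁ ^ 2 := by
  intro x
  have hW : w₀ + w₁ ≠ 0 := by positivity
  set xs : E3 := (w₀ + w₁)⁻¹ • (w₀ • r₀ + w₁ • r₁) with hxs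
  obtain ⟨s₀, hs₀⟩ := hL₀ ▸ hr₀
  obtain ⟨s₁, hs₁⟩ := hL₁ ▸ hr₁
  -- orthogonality of r₀ - r₁ to both directions
  have key : ∀ (m : E3), ‖m‖ = 1 →
      (∀ s : ℝ, ‖r₀ - r₁‖ ^ 2 ≤ ‖r₀ - r₁‖ ^ 2 + 2 * s * ⟪r₀ - r₁, m⟫ + s ^ 2) →
      ⟪r₀ - r₁, m⟫ = 0 := by
    intro m hm h
    have := h (-⟪r₀ - r₁, m⟫)
    nlinarith [sq_nonneg (⟪r₀ - r₁, m⟫ : ℝ)]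
  have ha : ⟪r₀ - r₁, m₀⟫ = 0 := by
    refine key m₀ hm₀ ?_
    intro s
    have hmem : r₀ + s • m₀ ∈ L₀ := by
      rw [hL₀]; exact ⟨s₀ + s, by rw [hs₀]; module⟩
    have hle := hclosest _ hmem _ hr₁
    have hsq : ‖r₀ - r₁‖ ^ 2 ≤ ‖r₀ + s • m₀ - r₁‖ ^ 2 := by
      nlinarith [norm_nonneg (r₀ - r₁), norm_nonneg (r₀ + s • m₀ - r₁)]
    have hexp : ‖r₀ + s • m₀ - r₁‖ ^ 2
        = ‖r₀ - r₁‖ ^ 2 + 2 * s * ⟪r₀ - r₁, m₀⟫ + s ^ 2 := by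
      have h1 : r₀ + s • m₀ - r₁ = (r₀ - r₁) + s • m₀ := by module
      rw [h1, norm_add_sq_real, real_inner_smul_right, norm_smul]
      simp [hm₀]
      ring
    linarith [hexp ▸ hsq]
  have hb : ⟪r₀ - r₁, m₁⟫ = 0 := by
    refine key m₁ hm₁ ?_
    intro s
    have hmem : r₁ + (-s) • m₁ ∈ L₁ := by
      rw [hL₁]; exact ⟨s₁ + (-s), by rw [hs₁]; module⟩
    have hle := hclosest _ hr₀ _ hmem
    have hsq : ‖r₀ - r₁‖ ^ 2 ≤ ‖r₀ - (r₁ + (-s) • m₁)‖ ^ 2 := by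
      nlinarith [norm_nonneg (r₀ - r₁), norm_nonneg (r₀ - (r₁ + (-s) • m₁))]
    have hexp : ‖r₀ - (r₁ + (-s) • m₁)‖ ^ 2
        = ‖r₀ - r₁‖ ^ 2 + 2 * s * ⟪r₀ - r₁, m₁⟫ + s ^ 2 := by
      have h1 : r₀ - (r₁ + (-s) • m₁) = (r₀ - r₁) + s • m₁ := by module
      rw [h1, norm_add_sq_real, real_inner_smul_right, norm_smul]
      simp [hm₁]
      ring
    linarith [hexp ▸ hsq]
  -- position of xs relative to r₀, r₁
  have h0 : xs - r₀ = ((w₀ + w₁)⁻¹ * w₁) • (r₁ - r₀) := by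
    rw [hxs]; match_scalars <;> field_simp <;> ring
  have h1 : xs - r₁ = ((w₀ + w₁)⁻¹ * w₀) • (r₀ - r₁) := by
    rw [hxs]; match_scalars <;> field_simp <;> ring
  have hmm₀ : ⟪m₀, m₀⟫ = 1 := by rw [real_inner_self_eq_norm_sq, hm₀]; norm_num
  have hmm₁ : ⟪m₁, m₁⟫ = 1 := by rw [real_inner_self_eq_norm_sq, hm₁]; norm_num
  -- inner products of xs - cᵢ with mᵢ
  have hxc₀ : xs - c₀ = ((w₀ + w₁)⁻¹ * w₁) • (r₁ - r₀) + s₀ • m₀ := by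
    have : xs - c₀ = (xs - r₀) + (r₀ - c₀) := by module
    rw [this, h0, hs₀]; module
  have hxc₁ : xs - c₁ = ((w₀ + w₁)⁻¹ * w₀) • (r₀ - r₁) + s₁ • m₁ := by
    have : xs - c₁ = (xs - r₁) + (r₁ - c₁) := by module
    rw [this, h1, hs₁]; module
  have hic₀ : ⟪xs - c₀, m₀⟫ = s₀ := by
    rw [hxc₀, inner_add_left, real_inner_smul_left, real_inner_smul_left, hmm₀]
    have : ⟪r₁ - r₀, m₀⟫ = 0 := by
      have : r₁ - r₀ = -(r₀ - r₁) := by module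
      rw [this, inner_neg_left, ha]; ring
    rw [this]; ring
  have hic₁ : ⟪xs - c₁, m₁⟫ = s₁ := by
    rw [hxc₁, inner_add_left, real_inner_smul_left, real_inner_smul_left, hmm₁, hb]
    ring
  -- gradient vanishes: the projected residuals cancel
  have hP₀ : (xs - c₀) - ⟪xs - c₀, m₀⟫ • m₀ = ((w₀ + w₁)⁻¹ * w₁) • (r₁ - r₀) := by
    rw [hic₀, hxc₀]; module
  have hP₁ : (xs - c₁) - ⟪xs - c₁, m₁⟫ • m₁ = ((w₀ + w₁)⁻¹ * w₀) • (r₀ - r₁) := by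
    rw [hic₁, hxc₁]; module
  have hgrad : w₀ • ((xs - c₀) - ⟪xs - c₀, m₀⟫ • m₀)
      + w₁ • ((xs - c₁) - ⟪xs - c₁, m₁⟫ • m₁) = 0 := by
    rw [hP₀, hP₁]; module
  -- cross term with v := x - xs vanishes
  set v : E3 := x - xs with hv
  have hcross : w₀ * (⟪v, xs - c₀⟫ - ⟪v, m₀⟫ * ⟪xs - c₀, m₀⟫)
      + w₁ * (⟪v, xs - c₁⟫ - ⟪v, m₁⟫ * ⟪xs - c₁, m₁⟫) = 0 := by
    have := congrArg (fun y => ⟪v, y⟫) hgrad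
    simp only [inner_add_right, inner_zero_right, real_inner_smul_right,
      inner_sub_right] at this
    have e₀ : ⟪v, xs - c₀⟫ = ⟪v, xs⟫ - ⟪v, c₀⟫ := inner_sub_right v xs c₀
    have e₁ : ⟪v, xs - c₁⟫ = ⟪v, xs⟫ - ⟪v, c₁⟫ := inner_sub_right v xs c₁
    rw [e₀, e₁]
    linarith [this]
  -- rewrite inf distances
  rw [hL₀, hL₁, aux_dist_line_sq c₀ m₀ hm₀, aux_dist_line_sq c₁ m₁ hm₁,
    aux_dist_line_sq c₀ m₀ hm₀ x, aux_dist_line_sq c₁ m₁ hm₁ x]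
  have hx₀ : x - c₀ = v + (xs - c₀) := by rw [hv]; module
  have hx₁ : x - c₁ = v + (xs - c₁) := by rw [hv]; module
  rw [hx₀, hx₁, aux_expand, aux_expand]
  have hq₀ : ⟪v, m₀⟫ ^ 2 ≤ ‖v‖ ^ 2 := by
    have := abs_real_inner_le_norm v m₀
    rw [hm₀, mul_one] at this
    nlinarith [abs_nonneg (⟪v, m₀⟫ : ℝ), sq_abs (⟪v, m₀⟫ : ℝ)]
  have hq₁ : ⟪v, m₁⟫ ^ 2 ≤ ‖v‖ ^ 2 := by
    have := abs_real_inner_le_norm v m₁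
    rw [hm₁, mul_one] at this
    nlinarith [abs_nonneg (⟪v, m₁⟫ : ℝ), sq_abs (⟪v, m₁⟫ : ℝ)]
  have g₀ := mul_le_mul_of_nonneg_left hq₀ hw₀.le
  have g₁ := mul_le_mul_of_nonneg_left hq₁ hw₁.le
  nlinarith [hcross, g₀, g₁]
end

section
/- Let a, b ∈ ℝ³ be unit vectors and t ∈ ℝ³ with a × b ≠ 0. Let λmid₀ = ((a × b)·(b × t))/‖a × b‖² and λmid₁ = ((a × b)·(a × t))/‖a × b‖² be the classic midpoint depths, and assume λmid₀ ≠ 0 and λmid₁ ≠ 0. Set λ₀ = |λmid₀| and λ₁ = |λmid₁|. Then the test-of-adequacy inequality ‖t + λ₀·a − λ₁·b‖² ≥ min(‖t + λ₀·a + λ₁·b‖², ‖t − λ₀·a − λ₁·b‖², ‖t − λ₀·a + λ₁·b‖²) holds if and only if λmid₀ < 0 or λmid₁ < 0. -/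
open scoped RealInnerProductSpace
open Matrix

/-- Binet–Cauchy identity for the cross product. -/
lemma stmt13_binet (u v w x : E3) :
    ⟪cross3 u v, cross3 w x⟫ = ⟪u,w⟫*⟪v,x⟫ - ⟪u,x⟫*⟪v,w⟫ := by
  simp [cross3, PiLp.inner_apply, cross_apply, Fin.sum_univ_three, RCLike.inner_apply,
    conj_trivial]
  ring

lemma stmt13_expand (t a b : E3) (x y : ℝ) :
    ‖t + x•a + y•b‖^2 = ‖t‖^2 + x^2*‖a‖^2 + y^2*‖b‖^2
      + 2*x*⟪t,a⟫ + 2*y*⟪t,b⟫ + 2*x*y*⟪a,b⟫ := by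
  rw [← real_inner_self_eq_norm_sq, ← real_inner_self_eq_norm_sq,
    ← real_inner_self_eq_norm_sq, ← real_inner_self_eq_norm_sq]
  simp only [inner_add_left, inner_add_right, real_inner_smul_left, real_inner_smul_right,
    real_inner_comm]
  ring

lemma stmt13_core (T c d e L0 L1 l0 l1 : ℝ) (he2 : e^2 < 1)
    (hc : c = e*L1 - L0) (hd : d = L1 - e*L0) (hne0 : L0 ≠ 0) (hne1 : L1 ≠ 0)
    (hl0 : l0 = |L0|) (hl1 : l1 = |L1|) :
    T + l0^2*1^2 + (-l1)^2*1^2 + 2*l0*c + 2*(-l1)*d + 2*l0*(-l1)*e ≥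
      min (T + l0^2*1^2 + l1^2*1^2 + 2*l0*c + 2*l1*d + 2*l0*l1*e)
        (min (T + (-l0)^2*1^2 + (-l1)^2*1^2 + 2*(-l0)*c + 2*(-l1)*d + 2*(-l0)*(-l1)*e)
          (T + (-l0)^2*1^2 + l1^2*1^2 + 2*(-l0)*c + 2*l1*d + 2*(-l0)*l1*e)) ↔
    L0 < 0 ∨ L1 < 0 := by
  subst hc hd
  constructor
  · intro h
    by_contra hcon
    push_neg at hcon
    obtain ⟨h0', h1'⟩ := hcon
    have hp0 : 0 < L0 := lt_of_le_of_ne h0' (Ne.symm hne0)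
    have hp1 : 0 < L1 := lt_of_le_of_ne h1' (Ne.symm hne1)
    have ha0 : l0 = L0 := by rw [hl0, abs_of_pos hp0]
    have ha1 : l1 = L1 := by rw [hl1, abs_of_pos hp1]
    subst ha0 ha1
    have h1e : 0 < 1 - e := by nlinarith
    refine absurd h (not_le.mpr (lt_min (by nlinarith [mul_pos hp1 hp1])
      (lt_min (by nlinarith [mul_pos hp0 hp0]) ?_)))
    nlinarith [mul_pos (mul_pos h1e hp0) hp1, sq_nonneg (l0 - l1)]
  · intro h
    rcases lt_or_gt_of_ne hne0 with hs0 | hs0 <;> rcases lt_or_gt_of_ne hne1 with hs1 | hs1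
    · have ha0 : l0 = -L0 := by rw [hl0, abs_of_neg hs0]
      have ha1 : l1 = -L1 := by rw [hl1, abs_of_neg hs1]
      refine le_trans (le_trans (min_le_right _ _) (min_le_right _ _)) ?_
      subst ha0 ha1
      nlinarith [sq_nonneg (e*L0 - L1), sq_nonneg L0, he2]
    · have ha0 : l0 = -L0 := by rw [hl0, abs_of_neg hs0]
      have ha1 : l1 = L1 := by rw [hl1, abs_of_pos hs1]
      refine le_trans (le_trans (min_le_right _ _) (min_le_left _ _)) ?_
      subst ha0 ha1
      nlinarith [sq_nonneg L0]
    · have ha0 : l0 = L0 := by rw [hl0, abs_of_pos hs0]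
      have ha1 : l1 = -L1 := by rw [hl1, abs_of_neg hs1]
      refine le_trans (min_le_left _ _) ?_
      subst ha0 ha1
      nlinarith [sq_nonneg L1]
    · rcases h with h | h <;> linarith

theorem stmt_13 (a b t : E3) (ha : ‖a‖ = 1) (hb : ‖b‖ = 1) (hab : cross3 a b ≠ 0)
    (lmid₀ lmid₁ : ℝ)
    (h0 : lmid₀ = ⟪cross3 a b, cross3 b t⟫ / ‖cross3 a b‖ ^ 2)
    (h1 : lmid₁ = ⟪cross3 a b, cross3 a t⟫ / ‖cross3 a b‖ ^ 2)
    (hne0 : lmid₀ ≠ 0) (hne1 : lmid₁ ≠ 0)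
    (l₀ l₁ : ℝ) (hl₀ : l₀ = |lmid₀|) (hl₁ : l₁ = |lmid₁|) :
    ‖t + l₀ • a - l₁ • b‖ ^ 2 ≥
      min (‖t + l₀ • a + l₁ • b‖ ^ 2)
        (min (‖t - l₀ • a - l₁ • b‖ ^ 2) (‖t - l₀ • a + l₁ • b‖ ^ 2)) ↔
    lmid₀ < 0 ∨ lmid₁ < 0 := by
  have hE : ‖cross3 a b‖ ^ 2 = 1 - ⟪a,b⟫ ^ 2 := by
    have h := stmt13_binet a b a b
    rw [real_inner_self_eq_norm_sq, real_inner_self_eq_norm_sq, real_inner_self_eq_norm_sq,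
      ha, hb, real_inner_comm a b] at h
    rw [h]; ring
  have hEpos : (0:ℝ) < 1 - ⟪a,b⟫ ^ 2 := by
    rw [← hE]; exact pow_pos (norm_pos_iff.mpr hab) 2
  have hEne : (1:ℝ) - ⟪a,b⟫ ^ 2 ≠ 0 := ne_of_gt hEpos
  have he2 : ⟪a,b⟫ ^ 2 < 1 := by linarith
  have hR1 : lmid₀ * (1 - ⟪a,b⟫ ^ 2) = ⟪a,b⟫ * ⟪t,b⟫ - ⟪t,a⟫ := by
    have hb1 := stmt13_binet a b b t
    rw [real_inner_comm t b, real_inner_comm t a, real_inner_self_eq_norm_sq, hb] at hb1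
    rw [h0, hE, hb1, div_mul_cancel₀ _ hEne]
    ring
  have hR2 : lmid₁ * (1 - ⟪a,b⟫ ^ 2) = ⟪t,b⟫ - ⟪a,b⟫ * ⟪t,a⟫ := by
    have hb1 := stmt13_binet a b a t
    rw [real_inner_comm t b, real_inner_comm t a, real_inner_self_eq_norm_sq, ha,
      real_inner_comm a b] at hb1
    rw [h1, hE, hb1, div_mul_cancel₀ _ hEne]
    ring
  have hc : ⟪t,a⟫ = ⟪a,b⟫ * lmid₁ - lmid₀ := by
    have key : (1 - ⟪a,b⟫ ^ 2) * (⟪t,a⟫ - (⟪a,b⟫ * lmid₁ - lmid₀)) = 0 := by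
      linear_combination hR1 - ⟪a,b⟫ * hR2
    have := (mul_eq_zero.mp key).resolve_left hEne
    linarith
  have hd : ⟪t,b⟫ = lmid₁ - ⟪a,b⟫ * lmid₀ := by
    have key : (1 - ⟪a,b⟫ ^ 2) * (⟪t,b⟫ - (lmid₁ - ⟪a,b⟫ * lmid₀)) = 0 := by
      linear_combination ⟪a,b⟫ * hR1 - hR2
    have := (mul_eq_zero.mp key).resolve_left hEne
    linarith
  have e1 : t + l₀ • a - l₁ • b = t + l₀ • a + (-l₁) • b := by module
  have e2 : t - l₀ • a - l₁ • b = t + (-l₀) • a + (-l₁) • b := by module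
  have e3 : t - l₀ • a + l₁ • b = t + (-l₀) • a + l₁ • b := by module
  rw [e1, e2, e3, stmt13_expand, stmt13_expand, stmt13_expand, stmt13_expand, ha, hb]
  exact stmt13_core (‖t‖^2) _ _ _ lmid₀ lmid₁ l₀ l₁ he2 hc hd hne0 hne1 hl₀ hl₁
end
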